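/- For every real number x and every integer n ≥ 0, the n-th coefficient of the formal power series (2x·t - 2t²)·(D⁻¹)² equals n · U_n(x). -/

import Mathlib

/-- `D = 1 - 2x·t + t²` as a formal power series in `t` over `ℝ`. -/
noncomputable def Dser (x : ℝ) : PowerSeries ℝ :=
  1 - PowerSeries.C (2 * x) * PowerSeries.X + PowerSeries.X ^ 2

/-- The Chebyshev polynomial of the second kind `U_n(x)`,
the `n`-th coefficient of `D⁻¹`. -/
noncomputable def chebU (x : ℝ) (n : ℕ) : ℝ :=
  PowerSeries.coeff n (Dser x)⁻¹

open PowerSeries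

theorem key (x : ℝ) :
    (PowerSeries.C (2 * x) * PowerSeries.X - 2 * PowerSeries.X ^ 2) * (Dser x)⁻¹ ^ 2 =
      PowerSeries.X * PowerSeries.derivative ℝ (Dser x)⁻¹ := by
  rw [PowerSeries.derivative_inv']
  have : PowerSeries.derivative ℝ (Dser x) =
      - PowerSeries.C (2 * x) + 2 * PowerSeries.X := by
    simp [Dser]
  rw [this]
  ring

/-- the `n`-th coefficient of `(2x·t - 2t²)·(D⁻¹)²` is `n·U_n(x)`. -/
theorem stmt13 (x : ℝ) (n : ℕ) :
    PowerSeries.coeff n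
        ((PowerSeries.C (2 * x) * PowerSeries.X - 2 * PowerSeries.X ^ 2) * (Dser x)⁻¹ ^ 2) =
      (n : ℝ) * chebU x n := by
  rw [key]
  cases n with
  | zero => simp
  | succ n =>
    rw [PowerSeries.coeff_succ_X_mul, PowerSeries.coeff_derivative, chebU]
    push_cast
    ring
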